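/- Let M be a real symmetric positive definite N×N matrix, let c₁,…,c_N > 0, and let τ > 0. Then there exists exactly one vector s ∈ (0,∞)^N such that s_k·(M s)_k = τ·c_k for every k = 1,…,N. Moreover there exist constants 0 < a ≤ b, depending only on M and on c₁,…,c_N (not on τ), such that for all τ ∈ (0,1] the unique solution satisfies a·√τ ≤ s_k ≤ b·√τ for every k. (Equivalently, setting λ_k = 1/s_k, the function F(λ) = ½·Σ_{j,k} M_{kj}/(λ_j λ_k) + τ·Σ_k c_k·log λ_k has exactly one critical point in (0,∞)^N, and its components are of order τ^{−1/2}.) -/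

import Mathlib

open Real

section Aux
open Matrix Finset

lemma posdef_coercive {N : ℕ} (hN : 0 < N) (M : Matrix (Fin N) (Fin N) ℝ) (hM : M.PosDef) :
    ∃ μ > 0, ∀ u : Fin N → ℝ, μ * ‖u‖ ^ 2 ≤ u ⬝ᵥ M.mulVec u := by
  haveI : Nonempty (Fin N) := Fin.pos_iff_nonempty.mp hN
  have hQ : Continuous fun u : Fin N → ℝ => u ⬝ᵥ M.mulVec u := by
    simp only [dotProduct, Matrix.mulVec]
    fun_prop
  have hsc : IsCompact (Metric.sphere (0 : Fin N → ℝ) 1) := isCompact_sphere _ _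
  have hsne : (Metric.sphere (0 : Fin N → ℝ) 1).Nonempty :=
    NormedSpace.sphere_nonempty.mpr zero_le_one
  obtain ⟨x₀, hx₀s, hx₀min⟩ := hsc.exists_isMinOn hsne hQ.continuousOn
  have hx₀norm : ‖x₀‖ = 1 := by simpa using hx₀s
  have hx₀ne : x₀ ≠ 0 := by intro h; rw [h] at hx₀norm; simp at hx₀norm
  set μ := x₀ ⬝ᵥ M.mulVec x₀ with hμdef
  have hμpos : 0 < μ := by simpa [star_trivial] using hM.dotProduct_mulVec_pos hx₀ne
  refine ⟨μ, hμpos, fun u => ?_⟩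
  rcases eq_or_ne u 0 with rfl | hu
  · simp
  · have hr : 0 < ‖u‖ := norm_pos_iff.mpr hu
    set v : Fin N → ℝ := ‖u‖⁻¹ • u with hv
    have hvs : v ∈ Metric.sphere (0 : Fin N → ℝ) 1 := by
      simp [hv, norm_smul, abs_of_pos (inv_pos.mpr hr), inv_mul_cancel₀ hr.ne']
    have hQv : μ ≤ v ⬝ᵥ M.mulVec v := hx₀min hvs
    have hexp : v ⬝ᵥ M.mulVec v = ‖u‖⁻¹ * ‖u‖⁻¹ * (u ⬝ᵥ M.mulVec u) := by
      simp [hv, Matrix.mulVec_smul, smul_dotProduct, dotProduct_smul, smul_eq_mul]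
      ring
    rw [hexp] at hQv
    have := mul_le_mul_of_nonneg_left hQv (le_of_lt (by positivity : (0:ℝ) < ‖u‖ ^ 2))
    calc μ * ‖u‖ ^ 2 = ‖u‖ ^ 2 * μ := by ring
    _ ≤ ‖u‖ ^ 2 * (‖u‖⁻¹ * ‖u‖⁻¹ * (u ⬝ᵥ M.mulVec u)) := this
    _ = u ⬝ᵥ M.mulVec u := by field_simp

lemma unique_sol {N : ℕ} (M : Matrix (Fin N) (Fin N) ℝ) (hM : M.PosDef)
    (c : Fin N → ℝ) (hc : ∀ k, 0 < c k) (τ : ℝ) (hτ : 0 < τ)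
    {u v : Fin N → ℝ} (hu : ∀ k, 0 < u k) (hue : ∀ k, u k * M.mulVec u k = τ * c k)
    (hv : ∀ k, 0 < v k) (hve : ∀ k, v k * M.mulVec v k = τ * c k) : u = v := by
  by_contra hne
  have hd : v - u ≠ 0 := sub_ne_zero.mpr (Ne.symm hne)
  have hpos : 0 < (v - u) ⬝ᵥ M.mulVec (v - u) := by
    simpa [star_trivial] using hM.dotProduct_mulVec_pos hd
  have hMu : ∀ k, M.mulVec u k = τ * c k / u k := fun k => by
    rw [eq_div_iff (hu k).ne', mul_comm]; exact hue k
  have hMv : ∀ k, M.mulVec v k = τ * c k / v k := fun k => by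
    rw [eq_div_iff (hv k).ne', mul_comm]; exact hve k
  have hexp : (v - u) ⬝ᵥ M.mulVec (v - u)
      = ∑ k, (v k - u k) * (M.mulVec v k - M.mulVec u k) := by
    simp [Matrix.mulVec_sub, dotProduct, Pi.sub_apply]
  have hle : (v - u) ⬝ᵥ M.mulVec (v - u) ≤ 0 := by
    rw [hexp]
    apply Finset.sum_nonpos
    intro k _
    rw [hMv k, hMu k]
    have huk := hu k; have hvk := hv k; have hck := hc k
    have : (v k - u k) * (τ * c k / v k - τ * c k / u k)
        = -(τ * c k * (v k - u k)^2 / (u k * v k)) := by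
      field_simp; ring
    rw [this]
    have : 0 ≤ τ * c k * (v k - u k)^2 / (u k * v k) := by positivity
    linarith
  linarith

lemma exists_sol {N : ℕ} (hN : 0 < N) (M : Matrix (Fin N) (Fin N) ℝ) (hM : M.PosDef)
    (c : Fin N → ℝ) (hc : ∀ k, 0 < c k) (τ : ℝ) (hτ : 0 < τ) :
    ∃ s : Fin N → ℝ, (∀ k, 0 < s k) ∧ ∀ k, s k * M.mulVec s k = τ * c k := by
  obtain ⟨μ, hμ, hμle⟩ := posdef_coercive hN M hM
  set μ' : ℝ := μ / N with hμ'def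
  have hμ' : 0 < μ' := div_pos hμ (by exact_mod_cast hN)
  clear_value μ'
  set Q : (Fin N → ℝ) → ℝ := fun u => u ⬝ᵥ M.mulVec u with hQdef
  set F : (Fin N → ℝ) → ℝ := fun u => Q u / 2 - τ * ∑ j, c j * Real.log (u j) with hFdef
  set h : Fin N → ℝ → ℝ := fun j t => μ' / 2 * t ^ 2 - τ * c j * Real.log t with hhdef
  set d : Fin N → ℝ := fun j => τ * c j - (τ * c j) ^ 2 / (2 * μ') with hddef
  clear_value Q F h d
  -- lower bound F u ≥ ∑ h j (u j)
  have hQlb : ∀ u : Fin N → ℝ, μ' * ∑ j, (u j) ^ 2 ≤ Q u := by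
    intro u
    have h1 : ∑ j, (u j) ^ 2 ≤ (N : ℝ) * ‖u‖ ^ 2 := by
      calc ∑ j, (u j) ^ 2 ≤ ∑ _j : Fin N, ‖u‖ ^ 2 := by
            apply Finset.sum_le_sum
            intro j _
            have h2 : |u j| ≤ ‖u‖ := by simpa using norm_le_pi_norm u j
            nlinarith [abs_nonneg (u j), sq_abs (u j)]
        _ = (N : ℝ) * ‖u‖ ^ 2 := by simp [mul_comm]
    calc μ' * ∑ j, (u j) ^ 2 ≤ μ' * ((N : ℝ) * ‖u‖ ^ 2) := by
          exact mul_le_mul_of_nonneg_left h1 hμ'.le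
      _ = μ * ‖u‖ ^ 2 := by
          rw [hμ'def]
          field_simp
      _ ≤ Q u := by rw [hQdef]; exact hμle u
  have hFlb : ∀ u : Fin N → ℝ, ∑ j, h j (u j) ≤ F u := by
    intro u
    simp only [hFdef, hhdef, Finset.sum_sub_distrib]
    have hsum : ∑ j, μ' / 2 * (u j) ^ 2 = (μ' * ∑ j, (u j) ^ 2) / 2 := by
      rw [Finset.mul_sum, Finset.sum_div]; apply Finset.sum_congr rfl; intros; ring
    have hsum2 : ∑ j, τ * c j * Real.log (u j) = τ * ∑ j, c j * Real.log (u j) := by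
      rw [Finset.mul_sum]; apply Finset.sum_congr rfl; intros; ring
    rw [hsum, hsum2]
    linarith [hQlb u]
  have hdle : ∀ j, ∀ t : ℝ, 0 < t → d j ≤ h j t := by
    intro j t ht
    have hlog := Real.log_le_sub_one_of_pos ht
    have hcj := hc j
    simp only [hhdef, hddef]
    have h1 : τ * c j * Real.log t ≤ τ * c j * (t - 1) :=
      mul_le_mul_of_nonneg_left hlog (mul_pos hτ hcj).le
    have h2 : (0:ℝ) ≤ (μ' * t - τ * c j) ^ 2 / (2 * μ') := by positivity
    have key : (μ' * t - τ * c j) ^ 2 / (2 * μ')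
        = μ' / 2 * t ^ 2 - τ * c j * t + (τ * c j) ^ 2 / (2 * μ') := by
      field_simp
      ring
    linarith
  -- thresholds
  set u₀ : Fin N → ℝ := fun _ => 1 with hu₀def
  set B : ℝ := F u₀ with hBdef
  set E : Fin N → ℝ := fun k => ∑ j ∈ Finset.univ.erase k, d j with hEdef
  set X : Fin N → ℝ := fun k => B - E k with hXdef
  set ε : Fin N → ℝ := fun k => min (1/2) (Real.exp (-(X k + 1) / (τ * c k))) with hεdef
  set R : Fin N → ℝ := fun k => max 2 ((2 * (τ * c k) + 2 * |X k| + 2) / μ') with hRdef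
  have hεpos : ∀ k, 0 < ε k := fun k => lt_min (by norm_num) (Real.exp_pos _)
  have hεle : ∀ k, ε k ≤ 1/2 := fun k => min_le_left _ _
  have hεexp : ∀ k, ε k ≤ Real.exp (-(X k + 1) / (τ * c k)) := fun k => min_le_right _ _
  have hRge : ∀ k, (2:ℝ) ≤ R k := fun k => le_max_left _ _
  have hRdiv : ∀ k, (2 * (τ * c k) + 2 * |X k| + 2) / μ' ≤ R k := fun k => le_max_right _ _
  have hBE : ∀ k, X k = B - E k := fun k => by rw [hXdef]
  clear_value u₀ B E X ε R
  have hsmall : ∀ k, ∀ t : ℝ, 0 < t → t ≤ ε k → X k < h k t := by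
    intro k t ht htε
    have hck := hc k
    have htexp : t ≤ Real.exp (-(X k + 1) / (τ * c k)) := le_trans htε (hεexp k)
    have hlt : Real.log t ≤ -(X k + 1) / (τ * c k) := (Real.log_le_iff_le_exp ht).mpr htexp
    have h1 : τ * c k * Real.log t ≤ -(X k + 1) := by
      have := mul_le_mul_of_nonneg_left hlt (mul_pos hτ hck).le
      rwa [mul_div_cancel₀ _ (mul_pos hτ hck).ne'] at this
    have h2 : (0:ℝ) ≤ μ' / 2 * t ^ 2 := by positivity
    simp only [hhdef]
    linarith
  have hlarge : ∀ k, ∀ t : ℝ, R k ≤ t → X k < h k t := by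
    intro k t htR
    have hck := hc k
    have ht2 : (2:ℝ) ≤ t := le_trans (hRge k) htR
    have ht : (0:ℝ) < t := by linarith
    have htb : (2 * (τ * c k) + 2 * |X k| + 2) / μ' ≤ t := le_trans (hRdiv k) htR
    have htb' : 2 * (τ * c k) + 2 * |X k| + 2 ≤ μ' * t := by
      rw [div_le_iff₀ hμ'] at htb; linarith
    have hlog := Real.log_le_sub_one_of_pos ht
    have h1 : τ * c k * Real.log t ≤ τ * c k * (t - 1) :=
      mul_le_mul_of_nonneg_left hlog (mul_pos hτ hck).le
    have hXabs : X k ≤ |X k| := le_abs_self _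
    have hint1 : (2 * (τ * c k) + 2 * |X k| + 2) * t ≤ (μ' * t) * t :=
      mul_le_mul_of_nonneg_right htb' ht.le
    have hint2 : (0:ℝ) ≤ (|X k| + 1) * (t - 1) :=
      mul_nonneg (by positivity) (by linarith)
    simp only [hhdef]
    nlinarith [mul_pos hτ hck]
  -- compact set and minimizer
  set K : Set (Fin N → ℝ) := Set.Icc ε R with hKdef
  have hKc : IsCompact K := isCompact_Icc
  have hu₀K : u₀ ∈ K := by
    rw [hu₀def]
    constructor
    · intro k; simp only []; linarith [hεle k]
    · intro k; simp only []; linarith [hRge k]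
  have hKpos : ∀ u ∈ K, ∀ j, 0 < u j := by
    intro u hu j
    exact lt_of_lt_of_le (hεpos j) (hu.1 j)
  have hFcont : ContinuousOn F K := by
    intro u huK
    apply ContinuousAt.continuousWithinAt
    rw [hFdef]
    have hQc : Continuous Q := by
      rw [hQdef]
      simp only [dotProduct, Matrix.mulVec]
      fun_prop
    have hsumc : ContinuousAt (fun v : Fin N → ℝ => ∑ j, c j * Real.log (v j)) u := by
      apply tendsto_finset_sum
      intro j _
      have ha : ContinuousAt (fun v : Fin N → ℝ => v j) u := (continuous_apply j).continuousAt
      exact ContinuousAt.mul continuousAt_const (ha.log (hKpos u huK j).ne')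
    exact ContinuousAt.sub ((hQc.continuousAt).div_const 2)
      (ContinuousAt.mul continuousAt_const hsumc)
  obtain ⟨u, huK, humin⟩ := hKc.exists_isMinOn ⟨u₀, hu₀K⟩ hFcont
  have hupos : ∀ j, 0 < u j := hKpos u huK
  have hFuB : F u ≤ B := by rw [hBdef]; exact humin hu₀K
  have hsum_lb : ∀ k, h k (u k) + E k ≤ F u := by
    intro k
    have h1 := Finset.add_sum_erase Finset.univ (fun j => h j (u j)) (Finset.mem_univ k)
    have h2 : E k ≤ ∑ j ∈ Finset.univ.erase k, h j (u j) := by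
      rw [hEdef]
      apply Finset.sum_le_sum
      intro j _
      exact hdle j (u j) (hupos j)
    have := hFlb u
    linarith
  have hult : ∀ k, ε k < u k := by
    intro k
    by_contra hcon
    push_neg at hcon
    have := hsmall k (u k) (hupos k) hcon
    have h2 := hBE k
    linarith [hsum_lb k]
  have hugt : ∀ k, u k < R k := by
    intro k
    by_contra hcon
    push_neg at hcon
    have := hlarge k (u k) hcon
    have h2 := hBE k
    linarith [hsum_lb k]
  -- u is the desired solution
  refine ⟨u, hupos, fun k => ?_⟩
  have hsym : ∀ i j, M i j = M j i := by
    intro i j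
    have := congrFun (congrFun hM.1 j) i
    simpa [Matrix.conjTranspose_apply] using this
  -- expansion of Q along coordinate k
  have hupdate : ∀ t : ℝ, Function.update u k t = u + (t - u k) • (Pi.single k 1 : Fin N → ℝ) := by
    intro t
    funext j
    by_cases hj : j = k
    · subst hj; simp
    · simp [Function.update_of_ne hj, Pi.single_apply, Ne.symm hj]
  have hcol : ∀ w : Fin N → ℝ, w ⬝ᵥ M.mulVec (Pi.single k 1) = M.mulVec w k := by
    intro w
    rw [Matrix.mulVec_single_one]
    simp only [dotProduct, Matrix.mulVec, mul_one, Matrix.col_apply]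
    apply Finset.sum_congr rfl
    intro i _
    rw [hsym i k]
    ring
  have hrow : ∀ w : Fin N → ℝ, (Pi.single k 1 : Fin N → ℝ) ⬝ᵥ M.mulVec w = M.mulVec w k := by
    intro w
    rw [single_dotProduct, one_mul]
  have hQexp : ∀ t : ℝ, Q (Function.update u k t)
      = Q u + 2 * (t - u k) * M.mulVec u k + (t - u k) ^ 2 * M k k := by
    intro t
    rw [hQdef]
    simp only [hupdate t]
    rw [Matrix.mulVec_add, Matrix.mulVec_smul]
    rw [dotProduct_add, add_dotProduct, add_dotProduct, dotProduct_smul, dotProduct_smul,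
      smul_dotProduct, smul_dotProduct]
    rw [hcol u, hrow u]
    have hee : (Pi.single k 1 : Fin N → ℝ) ⬝ᵥ M.mulVec (Pi.single k 1) = M k k := by
      rw [hcol]
      simp [Matrix.mulVec_single]
    rw [hee]
    simp only [smul_eq_mul]
    ring
  have hlogexp : ∀ t : ℝ, ∑ j, c j * Real.log (Function.update u k t j)
      = c k * Real.log t + ∑ j ∈ Finset.univ.erase k, c j * Real.log (u j) := by
    intro t
    rw [← Finset.add_sum_erase Finset.univ (fun j => c j * Real.log (Function.update u k t j))
      (Finset.mem_univ k)]
    congr 1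
    · simp
    · apply Finset.sum_congr rfl
      intro j hj
      rw [Function.update_of_ne (Finset.ne_of_mem_erase hj)]
  -- the 1-d function and its derivative
  obtain ⟨C0, hC0def⟩ : ∃ C0 : ℝ, C0 = ∑ j ∈ Finset.univ.erase k, c j * Real.log (u j) := ⟨_, rfl⟩
  obtain ⟨P, hPdef⟩ : ∃ P : ℝ, P = M.mulVec u k := ⟨_, rfl⟩
  set G : ℝ → ℝ := fun t =>
    (Q u + 2 * (t - u k) * P + (t - u k) ^ 2 * M k k) / 2 - τ * (c k * Real.log t + C0)
    with hGdef
  have hgG : ∀ t : ℝ, F (Function.update u k t) = G t := by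
    intro t
    simp only [hFdef, hGdef]
    rw [hQexp t, hlogexp t, hPdef, hC0def]
  have hG' : HasDerivAt G (P - τ * (c k / u k)) (u k) := by
    rw [hGdef]
    have h1 : HasDerivAt (fun t : ℝ => (Q u + 2 * (t - u k) * P + (t - u k) ^ 2 * M k k) / 2)
        ((2 * P + 2 * (u k - u k) * M k k) / 2) (u k) := by
      apply HasDerivAt.div_const
      have ha : HasDerivAt (fun t : ℝ => t - u k) 1 (u k) :=
        (hasDerivAt_id (u k)).sub_const (u k)
      have hb : HasDerivAt (fun t : ℝ => 2 * (t - u k) * P) (2 * P) (u k) := by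
        have := ((ha.const_mul 2).mul_const P)
        simpa [mul_comm, mul_assoc] using this
      have hc2 : HasDerivAt (fun t : ℝ => (t - u k) ^ 2 * M k k)
          (2 * (u k - u k) * M k k) (u k) := by
        have := (ha.pow 2).mul_const (M k k)
        simpa [mul_comm, mul_assoc] using this
      simpa [Pi.add_def] using (((hasDerivAt_const (u k) (Q u)).add hb).add hc2)
    have h2 : HasDerivAt (fun t : ℝ => τ * (c k * Real.log t + C0))
        (τ * (c k * (u k)⁻¹)) (u k) := by
      have hl := Real.hasDerivAt_log (hupos k).ne'
      have := ((hl.const_mul (c k)).add_const C0).const_mul τ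
      simpa using this
    have := h1.sub h2
    refine HasDerivAt.congr_deriv (by exact this) ?_
    have huk := (hupos k).ne'
    ring
  have hg' : HasDerivAt (fun t => F (Function.update u k t)) (P - τ * (c k / u k)) (u k) := by
    apply hG'.congr_of_eventuallyEq
    filter_upwards [] with t
    exact hgG t
  have hloc : IsLocalMin (fun t => F (Function.update u k t)) (u k) := by
    have hmem : Set.Ioo (ε k) (R k) ∈ nhds (u k) :=
      Ioo_mem_nhds (hult k) (hugt k)
    filter_upwards [hmem] with t ht
    have hKt : Function.update u k t ∈ K := by
      constructor
      · intro j
        by_cases hj : j = k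
        · subst hj; simp only [Function.update_self]; exact ht.1.le
        · rw [Function.update_of_ne hj]; exact huK.1 j
      · intro j
        by_cases hj : j = k
        · subst hj; simp only [Function.update_self]; exact ht.2.le
        · rw [Function.update_of_ne hj]; exact huK.2 j
    have : F u ≤ F (Function.update u k t) := humin hKt
    simpa [Function.update_eq_self] using this
  have hzero : P - τ * (c k / u k) = 0 := hloc.hasDerivAt_eq_zero hg'
  have hMuk : M.mulVec u k = τ * (c k / u k) := by rw [← hPdef]; linarith
  rw [hMuk]
  have huk := (hupos k).ne'
  field_simp

end Aux

/-- Let `M` be a real symmetric positive definite `N×N` matrix, let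
`c₁,…,c_N > 0` and `τ > 0`. Then there is exactly one vector `s ∈ (0,∞)^N` with
`s_k·(M s)_k = τ·c_k` for every `k`; moreover there exist constants `0 < a ≤ b`
depending only on `M` and `c` (not on `τ`) such that for all `τ ∈ (0,1]` the unique
solution satisfies `a·√τ ≤ s_k ≤ b·√τ` for every `k`. -/

theorem posdef_reduced_system_unique_solution
    (N : ℕ) (hN : 0 < N) (M : Matrix (Fin N) (Fin N) ℝ) (hM : M.PosDef)
    (c : Fin N → ℝ) (hc : ∀ k, 0 < c k) :
    (∀ τ : ℝ, 0 < τ →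
      ∃! s : Fin N → ℝ, (∀ k, 0 < s k) ∧ ∀ k, s k * M.mulVec s k = τ * c k) ∧
    (∃ a b : ℝ, 0 < a ∧ a ≤ b ∧
      ∀ τ : ℝ, 0 < τ → τ ≤ 1 →
        ∀ s : Fin N → ℝ, (∀ k, 0 < s k) → (∀ k, s k * M.mulVec s k = τ * c k) →
          ∀ k, a * Real.sqrt τ ≤ s k ∧ s k ≤ b * Real.sqrt τ) := by
  have hexu : ∀ τ : ℝ, 0 < τ →
      ∃! s : Fin N → ℝ, (∀ k, 0 < s k) ∧ ∀ k, s k * M.mulVec s k = τ * c k := by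
    intro τ hτ
    obtain ⟨s, hs1, hs2⟩ := exists_sol hN M hM c hc τ hτ
    exact ⟨s, ⟨hs1, hs2⟩, fun v hv => (unique_sol M hM c hc τ hτ hs1 hs2 hv.1 hv.2).symm⟩
  refine ⟨hexu, ?_⟩
  haveI : Nonempty (Fin N) := Fin.pos_iff_nonempty.mp hN
  obtain ⟨u₁, ⟨hu₁pos, hu₁eq⟩, -⟩ := hexu 1 one_pos
  refine ⟨Finset.univ.inf' Finset.univ_nonempty u₁, Finset.univ.sup' Finset.univ_nonempty u₁,
    ?_, ?_, ?_⟩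
  · rw [Finset.lt_inf'_iff]
    exact fun k _ => hu₁pos k
  · exact le_trans (Finset.inf'_le _ (Finset.mem_univ (Classical.arbitrary _)))
      (Finset.le_sup' _ (Finset.mem_univ _))
  · intro τ hτ hτ1 s hs hseq k
    have hsqrt : 0 < Real.sqrt τ := Real.sqrt_pos.mpr hτ
    have hscale : M.mulVec (fun j => Real.sqrt τ * u₁ j) = fun k => Real.sqrt τ * M.mulVec u₁ k := by
      funext i
      simp only [Matrix.mulVec, dotProduct, Finset.mul_sum]
      apply Finset.sum_congr rfl
      intros
      ring
    have hpos2 : ∀ j, 0 < Real.sqrt τ * u₁ j := fun j => mul_pos hsqrt (hu₁pos j)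
    have hsol : ∀ j, (Real.sqrt τ * u₁ j) * M.mulVec (fun i => Real.sqrt τ * u₁ i) j = τ * c j := by
      intro j
      rw [hscale]
      have h1 := hu₁eq j
      have h2 : Real.sqrt τ * Real.sqrt τ = τ := Real.mul_self_sqrt hτ.le
      calc Real.sqrt τ * u₁ j * (Real.sqrt τ * M.mulVec u₁ j)
          = (Real.sqrt τ * Real.sqrt τ) * (u₁ j * M.mulVec u₁ j) := by ring
        _ = τ * c j := by rw [h2, h1]; ring
    have hs_eq : s = fun j => Real.sqrt τ * u₁ j :=
      unique_sol M hM c hc τ hτ hs hseq hpos2 hsol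
    have hinf : Finset.univ.inf' Finset.univ_nonempty u₁ ≤ u₁ k :=
      Finset.inf'_le _ (Finset.mem_univ k)
    have hsup : u₁ k ≤ Finset.univ.sup' Finset.univ_nonempty u₁ :=
      Finset.le_sup' _ (Finset.mem_univ k)
    rw [hs_eq]
    constructor
    · calc Finset.univ.inf' Finset.univ_nonempty u₁ * Real.sqrt τ
          = Real.sqrt τ * Finset.univ.inf' Finset.univ_nonempty u₁ := by ring
        _ ≤ Real.sqrt τ * u₁ k := mul_le_mul_of_nonneg_left hinf hsqrt.le
    · calc Real.sqrt τ * u₁ k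
          ≤ Real.sqrt τ * Finset.univ.sup' Finset.univ_nonempty u₁ :=
            mul_le_mul_of_nonneg_left hsup hsqrt.le
        _ = Finset.univ.sup' Finset.univ_nonempty u₁ * Real.sqrt τ := by ring
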